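/- arXiv:0709.4626 — 6 statements merged into one kernel-verified Lean document; each statement's English description precedes it below -/
import Mathlib

section
/- Let α > 0, γ₀ ∈ ℝ and k ∈ ℝ with k ≠ 0, and set d(k) = (1 + 1/(α²k²))^{-1/2} - 1. The complex 2×2 matrix A = [[0, (i/2)·sgn(k)·d(k)], [-(i/2)·γ₀²·k²·sgn(k)·d(k), 0]] has exactly the two eigenvalues λ = +(1/2)|γ₀||k|(1 - (1 + 1/(α²k²))^{-1/2}) and λ = -(1/2)|γ₀||k|(1 - (1 + 1/(α²k²))^{-1/2}); in particular both eigenvalues are real. -/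
noncomputable section

open Real Complex

lemma spec_offdiag (b c s : ℂ) (hs : s ^ 2 = b * c) :
    spectrum ℂ (!![0, b; c, 0] : Matrix (Fin 2) (Fin 2) ℂ) = {s, -s} := by
  ext μ
  rw [spectrum.mem_iff, Matrix.isUnit_iff_isUnit_det, isUnit_iff_ne_zero, not_ne_iff]
  have hdet : ((algebraMap ℂ (Matrix (Fin 2) (Fin 2) ℂ)) μ - !![0, b; c, 0]).det
      = μ ^ 2 - b * c := by
    simp [Matrix.det_fin_two, Matrix.algebraMap_matrix_apply]
    ring
  rw [hdet, ← hs, sq_sub_sq, mul_eq_zero, add_eq_zero_iff_eq_neg, sub_eq_zero,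
    Set.mem_insert_iff, Set.mem_singleton_iff, or_comm]

/-- The eigenvalues of the coefficient matrix, at wave number `k`, of the linearization
of the Birkhoff–Rott-α equation about the flat vortex sheet with uniform vorticity
density `γ₀` are `±(1/2)|γ₀||k|(1 - (1 + 1/(α²k²))^{-1/2})`; in particular both are real. -/
theorem brAlpha_linearization_eigenvalues
    (α γ₀ k : ℝ) (hα : 0 < α) (hk : k ≠ 0) :
    spectrum ℂ
      (!![0, (Complex.I / 2) * (Real.sign k : ℂ) *
            (((1 + 1 / (α ^ 2 * k ^ 2)) ^ (-(1 / 2) : ℝ) - 1 : ℝ) : ℂ);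
          -(Complex.I / 2) * (γ₀ : ℂ) ^ 2 * (k : ℂ) ^ 2 * (Real.sign k : ℂ) *
            (((1 + 1 / (α ^ 2 * k ^ 2)) ^ (-(1 / 2) : ℝ) - 1 : ℝ) : ℂ), 0] :
        Matrix (Fin 2) (Fin 2) ℂ) =
    {((1 / 2 * |γ₀| * |k| * (1 - (1 + 1 / (α ^ 2 * k ^ 2)) ^ (-(1 / 2) : ℝ)) : ℝ) : ℂ),
     ((-(1 / 2 * |γ₀| * |k| * (1 - (1 + 1 / (α ^ 2 * k ^ 2)) ^ (-(1 / 2) : ℝ))) : ℝ) : ℂ)} := by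
  set r : ℝ := (1 + 1 / (α ^ 2 * k ^ 2)) ^ (-(1 / 2) : ℝ) with hr
  have hsg : ((Real.sign k : ℂ)) ^ 2 = 1 := by
    rcases hk.lt_or_gt with h | h
    · rw [Real.sign_of_neg h]; norm_num
    · rw [Real.sign_of_pos h]; norm_num
  have h1 : (1 / 2 * |γ₀| * |k| * (1 - r)) ^ 2 = 1 / 4 * γ₀ ^ 2 * k ^ 2 * (r - 1) ^ 2 := by
    rw [mul_pow, mul_pow, mul_pow, _root_.sq_abs, _root_.sq_abs]; ring
  have key : ((1 / 2 * |γ₀| * |k| * (1 - r) : ℝ) : ℂ) ^ 2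
      = ((Complex.I / 2) * (Real.sign k : ℂ) * ((r - 1 : ℝ) : ℂ)) *
        (-(Complex.I / 2) * (γ₀ : ℂ) ^ 2 * (k : ℂ) ^ 2 * (Real.sign k : ℂ) * ((r - 1 : ℝ) : ℂ)) := by
    rw [← Complex.ofReal_pow, h1]
    push_cast
    linear_combination ((1 : ℂ) / 4 * (γ₀ : ℂ) ^ 2 * (k : ℂ) ^ 2 * (Real.sign k : ℂ) ^ 2
        * ((r : ℂ) - 1) ^ 2) * Complex.I_sq
      - ((1 : ℂ) / 4 * (γ₀ : ℂ) ^ 2 * (k : ℂ) ^ 2 * ((r : ℂ) - 1) ^ 2) * hsg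
  rw [spec_offdiag _ _ _ key, Complex.ofReal_neg]
end
end

section
/- Let α > 0 and γ₀ ∈ ℝ, and for k ≠ 0 define λ(k) = (1/2)|γ₀||k|(1 - (1 + 1/(α²k²))^{-1/2}). Then lim_{|k| → ∞} |k|·λ(k) = |γ₀|/(4α²); in particular λ(k) → 0 as |k| → ∞, with algebraic decay of order 1/(α²|k|). -/
noncomputable section

open Real Filter

/-- The positive eigenvalue `λ(k) = (1/2)|γ₀||k|(1 - (1 + 1/(α²k²))^{-1/2})` of the
linearized Birkhoff–Rott-α system satisfies `|k|·λ(k) → |γ₀|/(4α²)` as `|k| → ∞`;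
in particular `λ(k) → 0` with algebraic decay of order `1/(α²|k|)`. -/
theorem brAlpha_eigenvalue_decay (α γ₀ : ℝ) (hα : 0 < α) :
    Tendsto
      (fun k : ℝ => |k| *
        (1 / 2 * |γ₀| * |k| * (1 - (1 + 1 / (α ^ 2 * k ^ 2)) ^ (-(1 / 2) : ℝ))))
      (atBot ⊔ atTop) (nhds (|γ₀| / (4 * α ^ 2))) ∧
    Tendsto
      (fun k : ℝ => 1 / 2 * |γ₀| * |k| * (1 - (1 + 1 / (α ^ 2 * k ^ 2)) ^ (-(1 / 2) : ℝ)))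
      (atBot ⊔ atTop) (nhds 0) := by
  set F := (atBot ⊔ atTop : Filter ℝ)
  set g : ℝ → ℝ := fun u => |γ₀| / (2 * α ^ 2) * (√(1 + u) * (√(1 + u) + 1))⁻¹ with hg
  have habs : Tendsto (fun k : ℝ => |k|) F atTop :=
    tendsto_sup.mpr ⟨tendsto_abs_atBot_atTop, tendsto_abs_atTop_atTop⟩
  have hne : ∀ᶠ k : ℝ in F, 0 < |k| := habs.eventually (eventually_gt_atTop 0)
  have hsq : Tendsto (fun k : ℝ => α ^ 2 * k ^ 2) F atTop := by
    have h1 : Tendsto (fun k : ℝ => α ^ 2 * |k| ^ 2) F atTop :=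
      ((tendsto_pow_atTop (by norm_num)).comp habs).const_mul_atTop (by positivity)
    simpa [sq_abs] using h1
  have hu : Tendsto (fun k : ℝ => 1 / (α ^ 2 * k ^ 2)) F (nhds 0) := by
    have h := hsq.inv_tendsto_atTop
    simp only [one_div]
    exact h
  have hden : ContinuousAt (fun u : ℝ => √(1 + u) * (√(1 + u) + 1)) 0 := by fun_prop
  have hden0 : (fun u : ℝ => √(1 + u) * (√(1 + u) + 1)) 0 ≠ 0 := by
    norm_num [Real.sqrt_one]
  have hgc : ContinuousAt g 0 := continuousAt_const.mul (hden.inv₀ hden0)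
  have hg0 : g 0 = |γ₀| / (4 * α ^ 2) := by
    simp only [hg]
    rw [add_zero, Real.sqrt_one]
    ring
  have hgu : Tendsto (fun k : ℝ => g (1 / (α ^ 2 * k ^ 2))) F (nhds (|γ₀| / (4 * α ^ 2))) := by
    rw [← hg0]
    exact hgc.tendsto.comp hu
  have heq : ∀ᶠ k : ℝ in F,
      g (1 / (α ^ 2 * k ^ 2)) =
        |k| * (1 / 2 * |γ₀| * |k| * (1 - (1 + 1 / (α ^ 2 * k ^ 2)) ^ (-(1 / 2) : ℝ))) := by
    filter_upwards [hne] with k hk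
    have hk0 : k ≠ 0 := by intro h; simp [h] at hk
    have hα0 : (α:ℝ) ≠ 0 := ne_of_gt hα
    set u : ℝ := 1 / (α ^ 2 * k ^ 2) with hudef
    have hupos : 0 < u := by positivity
    have h1u : (0:ℝ) < 1 + u := by linarith
    set s : ℝ := √(1 + u) with hs
    have hs1 : (1:ℝ) ≤ s := by
      have h := Real.sqrt_le_sqrt (show (1:ℝ) ≤ 1 + u by linarith)
      rwa [Real.sqrt_one] at h
    have hspos : (0:ℝ) < s := lt_of_lt_of_le one_pos hs1
    have hssq : s ^ 2 = 1 + u := Real.sq_sqrt h1u.le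
    have hrpow : (1 + u) ^ (-(1 / 2) : ℝ) = s⁻¹ := by
      rw [Real.rpow_neg h1u.le, hs, Real.sqrt_eq_rpow]
    have hk2 : u * (α ^ 2 * k ^ 2) = 1 := by
      rw [hudef]; field_simp
    have habs2 : |k| * (1 / 2 * |γ₀| * |k| * (1 - s⁻¹)) =
        1 / 2 * |γ₀| * k ^ 2 * (1 - s⁻¹) := by
      rw [← sq_abs]; ring
    have hs0 : s ≠ 0 := ne_of_gt hspos
    have hs10 : s + 1 ≠ 0 := by positivity
    rw [hrpow, habs2, hg]
    simp only [← hs]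
    field_simp
    linear_combination (-((abs γ₀)*α^2*k^2)) * hssq + (-(abs γ₀)) * hk2
  refine ⟨hgu.congr' heq, ?_⟩
  have hinv : Tendsto (fun k : ℝ => |k|⁻¹) F (nhds 0) := habs.inv_tendsto_atTop
  have h2 := (hgu.congr' heq).mul hinv
  rw [mul_zero] at h2
  refine h2.congr' ?_
  filter_upwards [hne] with k hk
  rw [mul_comm (abs k), mul_assoc, mul_inv_cancel₀ (ne_of_gt hk), mul_one]
end
end

section
/- Let C₁ > 0, T > 0, and let r : [0,T] → ℝ be differentiable with 0 < r(t) < 1 for all t ∈ [0,T] and r'(t) ≥ -C₁ r(t)(1 - log r(t)) for all t ∈ [0,T]. Then for every t ∈ [0,T]: r(t) ≥ r(0)^{exp(C₁ t)} · exp(1 - exp(C₁ t)). -/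
noncomputable section

open Real Set

/-- Osgood-type comparison lemma: if `0 < r(t) < 1` and
`r'(t) ≥ -C₁ r(t)(1 - log r(t))` on `[0,T]`, then
`r(t) ≥ r(0)^{exp(C₁ t)} exp(1 - exp(C₁ t))`. -/
theorem osgood_lowerBound
    (C₁ T : ℝ) (hC₁ : 0 < C₁) (hT : 0 < T)
    (r r' : ℝ → ℝ)
    (hderiv : ∀ t ∈ Icc (0:ℝ) T, HasDerivWithinAt r (r' t) (Icc (0:ℝ) T) t)
    (hpos : ∀ t ∈ Icc (0:ℝ) T, 0 < r t)
    (hlt1 : ∀ t ∈ Icc (0:ℝ) T, r t < 1)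
    (hineq : ∀ t ∈ Icc (0:ℝ) T, r' t ≥ -C₁ * r t * (1 - Real.log (r t))) :
    ∀ t ∈ Icc (0:ℝ) T,
      r t ≥ r 0 ^ Real.exp (C₁ * t) * Real.exp (1 - Real.exp (C₁ * t)) := by
  intro t ht
  have h0 : (0:ℝ) ∈ Icc (0:ℝ) T := ⟨le_refl 0, hT.le⟩
  set φ : ℝ → ℝ := fun s => Real.log (1 - Real.log (r s)) - C₁ * s with hφ
  -- key positivity facts
  have hone : ∀ s ∈ Icc (0:ℝ) T, 0 < 1 - Real.log (r s) := by
    intro s hs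
    have := Real.log_neg (hpos s hs) (hlt1 s hs)
    linarith
  -- derivative of φ within Icc
  have hφderiv : ∀ s ∈ Icc (0:ℝ) T,
      HasDerivWithinAt φ ((1 - Real.log (r s))⁻¹ * (-((r s)⁻¹ * r' s)) - C₁)
        (Icc (0:ℝ) T) s := by
    intro s hs
    have h1 : HasDerivWithinAt (fun u => Real.log (r u)) ((r s)⁻¹ * r' s)
        (Icc (0:ℝ) T) s :=
      (Real.hasDerivAt_log (hpos s hs).ne').comp_hasDerivWithinAt s (hderiv s hs)
    have h2 : HasDerivWithinAt (fun u => 1 - Real.log (r u)) (-((r s)⁻¹ * r' s))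
        (Icc (0:ℝ) T) s := by
      simpa [Pi.sub_def] using (hasDerivWithinAt_const s (Icc (0:ℝ) T) (1:ℝ)).sub h1
    have h3 : HasDerivWithinAt (fun u => Real.log (1 - Real.log (r u)))
        ((1 - Real.log (r s))⁻¹ * (-((r s)⁻¹ * r' s))) (Icc (0:ℝ) T) s :=
      by have := (Real.hasDerivAt_log (hone s hs).ne').comp_hasDerivWithinAt s h2; exact this
    simpa [hφ, Pi.sub_def] using h3.sub ((hasDerivWithinAt_id s _).const_mul C₁)
  -- φ is antitone on Icc
  have hanti : AntitoneOn φ (Icc (0:ℝ) T) := by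
    apply antitoneOn_of_hasDerivWithinAt_nonpos (convex_Icc 0 T)
      (fun s hs => (hφderiv s hs).continuousWithinAt)
      (fun s hs => ((hφderiv s (interior_subset hs)).mono interior_subset))
    intro s hs
    have hs' : s ∈ Icc (0:ℝ) T := interior_subset hs
    have hr := hpos s hs'
    have hl := hone s hs'
    have hi := hineq s hs'
    have key : (1 - Real.log (r s))⁻¹ * (-((r s)⁻¹ * r' s)) ≤ C₁ := by
      rw [← sub_nonneg]
      have h1 : 0 < r s * (1 - Real.log (r s)) := mul_pos hr hl
      have : C₁ - (1 - Real.log (r s))⁻¹ * (-((r s)⁻¹ * r' s))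
          = (C₁ * (r s * (1 - Real.log (r s))) + r' s) / (r s * (1 - Real.log (r s))) := by
        field_simp
        ring
      rw [this]
      apply div_nonneg _ h1.le
      nlinarith
    linarith
  -- conclude φ t ≤ φ 0
  have hφt : φ t ≤ φ 0 := hanti h0 ht ht.1
  simp only [hφ] at hφt
  have hE : (0:ℝ) < Real.exp (C₁ * t) := Real.exp_pos _
  -- exponentiate: 1 - log r t ≤ (1 - log r 0) * exp (C₁ t)
  have hexp : 1 - Real.log (r t) ≤ (1 - Real.log (r 0)) * Real.exp (C₁ * t) := by
    have := Real.exp_le_exp.2 (by linarith [hφt] : Real.log (1 - Real.log (r t))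
        ≤ Real.log (1 - Real.log (r 0)) + C₁ * t)
    rwa [Real.exp_log (hone t ht), Real.exp_add, Real.exp_log (hone 0 h0)] at this
  have hlog : Real.log (r 0) * Real.exp (C₁ * t) + (1 - Real.exp (C₁ * t))
      ≤ Real.log (r t) := by nlinarith
  calc r 0 ^ Real.exp (C₁ * t) * Real.exp (1 - Real.exp (C₁ * t))
      = Real.exp (Real.log (r 0) * Real.exp (C₁ * t) + (1 - Real.exp (C₁ * t))) := by
        rw [Real.rpow_def_of_pos (hpos 0 h0), Real.exp_add]
    _ ≤ Real.exp (Real.log (r t)) := Real.exp_le_exp.2 hlog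
    _ = r t := Real.exp_log (hpos t ht)
end
end

section
/- For every α > 0, the kernel K^α : ℝ² → ℝ² is continuous on all of ℝ² (including at the origin, where K^α(0) = 0), and there exists a constant C > 0, independent of α, such that |K^α(x)| ≤ C/α for all x ∈ ℝ². -/
noncomputable section

open Real MeasureTheory Filter Set intervalIntegral Classical

abbrev E2 := EuclideanSpace ℝ (Fin 2)

/-- The modified Bessel function of the second kind of order one,
`K₁(r) = r ∫_{1}^{∞} e^{-rt} (t²-1)^{1/2} dt`. -/
def besselK1 (r : ℝ) : ℝ := r * ∫ t in Set.Ioi (1:ℝ), Real.exp (-r * t) * (t ^ 2 - 1) ^ ((1:ℝ)/2)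

/-- `DΨ^α(r) = (1/(2π)) (1/r - (1/α) K₁(r/α))`. -/
def DPsi (α r : ℝ) : ℝ := (1 / (2 * π)) * (1 / r - (1 / α) * besselK1 (r / α))

/-- `(x₁, x₂)^⊥ = (-x₂, x₁)`. -/
def perp (x : E2) : E2 := (WithLp.equiv 2 (Fin 2 → ℝ)).symm ![-(x 1), x 0]

/-- The smoothed Birkhoff–Rott kernel `K^α(x) = (x^⊥/|x|) DΨ^α(|x|)`, `K^α(0) = 0`. -/
def Kalpha (α : ℝ) (x : E2) : E2 := if x = 0 then 0 else (DPsi α ‖x‖ / ‖x‖) • perp x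

open Topology

namespace KP

/-! ### Elementary exponential integrals -/

lemma tendsto_exp_neg_smul {s : ℝ} (hs : 0 < s) :
    Tendsto (fun t : ℝ => Real.exp (-s * t)) atTop (𝓝 0) := by
  rw [Real.tendsto_exp_comp_nhds_zero]
  exact (tendsto_neg_atBot_iff.mpr (Tendsto.const_mul_atTop hs tendsto_id)).congr
    (fun t => by simp)

lemma hasDerivAt_exp_neg (s t : ℝ) :
    HasDerivAt (fun u : ℝ => Real.exp (-s * u)) (-s * Real.exp (-s * t)) t := by
  have h : HasDerivAt (fun u : ℝ => -s * u) (-s) t := by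
    simpa using (hasDerivAt_id t).const_mul (-s)
  simpa [mul_comm] using h.exp

lemma integral_exp_Ioi {s : ℝ} (hs : 0 < s) (a : ℝ) :
    ∫ t in Ioi a, Real.exp (-s * t) = Real.exp (-s * a) / s := by
  have hder : ∀ x ∈ Ici a, HasDerivAt (fun u : ℝ => -(Real.exp (-s * u) / s))
      (Real.exp (-s * x)) x := by
    intro x _
    have := ((hasDerivAt_exp_neg s x).div_const s).neg
    refine this.congr_deriv ?_
    field_simp [hs.ne']
  have htend : Tendsto (fun u : ℝ => -(Real.exp (-s * u) / s)) atTop (𝓝 0) := by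
    have := ((tendsto_exp_neg_smul hs).div_const s).neg
    simpa using this
  have := integral_Ioi_of_hasDerivAt_of_nonneg' hder
    (fun x _ => (Real.exp_pos _).le) htend
  simpa using this

lemma tendsto_aux {s : ℝ} (hs : 0 < s) :
    Tendsto (fun u : ℝ => -((u / s + 1 / s ^ 2) * Real.exp (-s * u))) atTop (𝓝 0) := by
  have h0 : Tendsto (fun u : ℝ => (s * u) * Real.exp (-(s * u))) atTop (𝓝 0) := by
    have := (by simpa using tendsto_pow_mul_exp_neg_atTop_nhds_zero 1 :
      Tendsto (fun x : ℝ => x * Real.exp (-x)) atTop (𝓝 0))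
    exact this.comp (Tendsto.const_mul_atTop hs tendsto_id)
  have h1 : Tendsto (fun u : ℝ => u * Real.exp (-s * u)) atTop (𝓝 0) := by
    have := h0.const_mul (1/s)
    rw [mul_zero] at this
    refine this.congr (fun u => ?_)
    rw [neg_mul]
    field_simp
  have h2 := (h1.const_mul (1/s)).add ((tendsto_exp_neg_smul hs).const_mul (1/s^2))
  simp only [mul_zero, add_zero] at h2
  have := h2.neg
  rw [neg_zero] at this
  refine this.congr (fun u => ?_)
  ring

lemma hasDerivAt_aux (s : ℝ) (hs : 0 < s) (x : ℝ) :
    HasDerivAt (fun u : ℝ => -((u / s + 1 / s ^ 2) * Real.exp (-s * u)))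
      (x * Real.exp (-s * x)) x := by
  have h1 : HasDerivAt (fun u : ℝ => u / s + 1 / s ^ 2) (1 / s) x :=
    ((hasDerivAt_id x).div_const s).add_const (1 / s ^ 2)
  have := (h1.mul (hasDerivAt_exp_neg s x)).neg
  refine this.congr_deriv ?_
  field_simp [hs.ne']
  ring

lemma integrableOn_t_exp {s : ℝ} (hs : 0 < s) {a : ℝ} (ha : 0 ≤ a) :
    IntegrableOn (fun t : ℝ => t * Real.exp (-s * t)) (Ioi a) := by
  exact integrableOn_Ioi_deriv_of_nonneg' (fun x _ => hasDerivAt_aux s hs x)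
    (fun x hx => mul_nonneg (le_trans ha (le_of_lt hx)) (Real.exp_pos _).le)
    (tendsto_aux hs)

lemma integral_t_exp {s : ℝ} (hs : 0 < s) {a : ℝ} (ha : 0 ≤ a) :
    ∫ t in Ioi a, t * Real.exp (-s * t) = (a / s + 1 / s ^ 2) * Real.exp (-s * a) := by
  have := integral_Ioi_of_hasDerivAt_of_nonneg' (fun x _ => hasDerivAt_aux s hs x)
    (fun x hx => mul_nonneg (le_trans ha (le_of_lt hx)) (Real.exp_pos _).le)
    (tendsto_aux hs)
  simpa using this

/-! ### Square-root inequalities -/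

lemma sqrt_le_self' {t : ℝ} (ht : 1 ≤ t) : Real.sqrt (t ^ 2 - 1) ≤ t := by
  have h := Real.sqrt_le_sqrt (show t ^ 2 - 1 ≤ t ^ 2 by nlinarith)
  rwa [Real.sqrt_sq (by linarith)] at h

lemma sub_sqrt_nonneg {t : ℝ} (ht : 1 ≤ t) : 0 ≤ t - Real.sqrt (t ^ 2 - 1) :=
  sub_nonneg.mpr (sqrt_le_self' ht)

lemma sub_sqrt_le_one {t : ℝ} (ht : 1 ≤ t) : t - Real.sqrt (t ^ 2 - 1) ≤ 1 := by
  have h := Real.sqrt_le_sqrt (show (t - 1) ^ 2 ≤ t ^ 2 - 1 by nlinarith)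
  rw [Real.sqrt_sq (by linarith)] at h
  linarith

lemma sub_sqrt_le_inv {t : ℝ} (ht : 1 ≤ t) : t - Real.sqrt (t ^ 2 - 1) ≤ 1 / t := by
  have h0 : (0:ℝ) < t := by linarith
  rw [le_div_iff₀ h0]
  have hsq : Real.sqrt (t ^ 2 - 1) ^ 2 = t ^ 2 - 1 := Real.sq_sqrt (by nlinarith)
  have hle := sqrt_le_self' ht
  have hnn := Real.sqrt_nonneg (t ^ 2 - 1)
  nlinarith [mul_nonneg (sub_nonneg.mpr hle) hnn]

/-! ### Integrability of the Bessel integrand -/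

lemma integrableOn_exp_sqrt {s : ℝ} (hs : 0 < s) :
    IntegrableOn (fun t : ℝ => Real.exp (-s * t) * Real.sqrt (t ^ 2 - 1)) (Ioi 1) := by
  refine Integrable.mono (integrableOn_t_exp hs zero_le_one)
    ((Continuous.aestronglyMeasurable (by fun_prop)).restrict) ?_
  filter_upwards [ae_restrict_mem measurableSet_Ioi] with t ht
  have ht1 : (1:ℝ) ≤ t := le_of_lt ht
  rw [Real.norm_eq_abs, Real.norm_eq_abs,
    abs_of_nonneg (mul_nonneg (Real.exp_pos _).le (Real.sqrt_nonneg _)),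
    abs_of_nonneg (mul_nonneg (by linarith) (Real.exp_pos _).le)]
  calc Real.exp (-s * t) * Real.sqrt (t ^ 2 - 1)
      ≤ Real.exp (-s * t) * t :=
        mul_le_mul_of_nonneg_left (sqrt_le_self' ht1) (Real.exp_pos _).le
    _ = t * Real.exp (-s * t) := mul_comm _ _

lemma integrableOn_exp_sub {s : ℝ} (hs : 0 < s) :
    IntegrableOn (fun t : ℝ => Real.exp (-s * t) * (t - Real.sqrt (t ^ 2 - 1))) (Ioi 1) := by
  refine Integrable.mono (exp_neg_integrableOn_Ioi 1 hs)
    ((Continuous.aestronglyMeasurable (by fun_prop)).restrict) ?_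
  filter_upwards [ae_restrict_mem measurableSet_Ioi] with t ht
  have ht1 : (1:ℝ) ≤ t := le_of_lt ht
  rw [Real.norm_eq_abs, Real.norm_eq_abs,
    abs_of_nonneg (mul_nonneg (Real.exp_pos _).le (sub_sqrt_nonneg ht1)),
    abs_of_nonneg (Real.exp_pos _).le]
  calc Real.exp (-s * t) * (t - Real.sqrt (t ^ 2 - 1))
      ≤ Real.exp (-s * t) * 1 :=
        mul_le_mul_of_nonneg_left (sub_sqrt_le_one ht1) (Real.exp_pos _).le
    _ = Real.exp (-s * t) := mul_one _

/-! ### The remainder integral `J` -/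

def J (s : ℝ) : ℝ := ∫ t in Ioi (1:ℝ), Real.exp (-s * t) * (t - Real.sqrt (t ^ 2 - 1))

lemma J_nonneg (s : ℝ) : 0 ≤ J s :=
  setIntegral_nonneg measurableSet_Ioi fun t ht =>
    mul_nonneg (Real.exp_pos _).le (sub_sqrt_nonneg (le_of_lt ht))

lemma J_le {s M : ℝ} (hs : 0 < s) (hM : 1 ≤ M) :
    J s ≤ (M - 1) + (1 / M) * (Real.exp (-s * M) / s) := by
  have hIoc : IntegrableOn (fun t : ℝ => Real.exp (-s * t) * (t - Real.sqrt (t ^ 2 - 1)))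
      (Ioc 1 M) := (integrableOn_exp_sub hs).mono_set Ioc_subset_Ioi_self
  have hIoi : IntegrableOn (fun t : ℝ => Real.exp (-s * t) * (t - Real.sqrt (t ^ 2 - 1)))
      (Ioi M) := (integrableOn_exp_sub hs).mono_set (Ioi_subset_Ioi hM)
  have hsplit : J s = (∫ t in Ioc 1 M, Real.exp (-s * t) * (t - Real.sqrt (t ^ 2 - 1)))
      + ∫ t in Ioi M, Real.exp (-s * t) * (t - Real.sqrt (t ^ 2 - 1)) := by
    rw [J, ← Ioc_union_Ioi_eq_Ioi hM]
    exact setIntegral_union Ioc_disjoint_Ioi_same measurableSet_Ioi hIoc hIoi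
  have h1 : (∫ t in Ioc 1 M, Real.exp (-s * t) * (t - Real.sqrt (t ^ 2 - 1))) ≤ M - 1 := by
    have hb : (∫ t in Ioc 1 M, Real.exp (-s * t) * (t - Real.sqrt (t ^ 2 - 1)))
        ≤ ∫ _t in Ioc 1 M, (1:ℝ) := by
      refine setIntegral_mono_on hIoc (integrableOn_const measure_Ioc_lt_top.ne)
        measurableSet_Ioc (fun t ht => ?_)
      have ht1 : (1:ℝ) ≤ t := le_of_lt ht.1
      have he : Real.exp (-s * t) ≤ 1 := by
        rw [Real.exp_le_one_iff]
        nlinarith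
      calc Real.exp (-s * t) * (t - Real.sqrt (t ^ 2 - 1))
          ≤ 1 * 1 := mul_le_mul he (sub_sqrt_le_one ht1) (sub_sqrt_nonneg ht1) zero_le_one
        _ = 1 := one_mul 1
    rw [setIntegral_const, measureReal_def, Real.volume_Ioc, smul_eq_mul, mul_one] at hb
    calc (∫ t in Ioc 1 M, Real.exp (-s * t) * (t - Real.sqrt (t ^ 2 - 1)))
        ≤ (ENNReal.ofReal (M - 1)).toReal := hb
      _ ≤ M - 1 := by rw [ENNReal.toReal_ofReal (by linarith)]
  have h2 : (∫ t in Ioi M, Real.exp (-s * t) * (t - Real.sqrt (t ^ 2 - 1)))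
      ≤ (1 / M) * (Real.exp (-s * M) / s) := by
    have hb : (∫ t in Ioi M, Real.exp (-s * t) * (t - Real.sqrt (t ^ 2 - 1)))
        ≤ ∫ t in Ioi M, (1 / M) * Real.exp (-s * t) := by
      refine setIntegral_mono_on hIoi
        (((exp_neg_integrableOn_Ioi M hs).const_mul (1 / M)))
        measurableSet_Ioi (fun t ht => ?_)
      have htM : M < t := ht
      have ht1 : (1:ℝ) ≤ t := le_trans hM htM.le
      have h0M : (0:ℝ) < M := lt_of_lt_of_le one_pos hM
      calc Real.exp (-s * t) * (t - Real.sqrt (t ^ 2 - 1))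
          ≤ Real.exp (-s * t) * (1 / t) :=
            mul_le_mul_of_nonneg_left (sub_sqrt_le_inv ht1) (Real.exp_pos _).le
        _ ≤ Real.exp (-s * t) * (1 / M) := by
            apply mul_le_mul_of_nonneg_left _ (Real.exp_pos _).le
            exact one_div_le_one_div_of_le h0M htM.le
        _ = (1 / M) * Real.exp (-s * t) := mul_comm _ _
    rwa [MeasureTheory.integral_const_mul, integral_exp_Ioi hs M] at hb
  linarith

/-! ### The function `Fk s = 1/s - K₁ s` and its bounds -/

def Fk (s : ℝ) : ℝ := 1 / s - besselK1 s

lemma besselK1_val {s : ℝ} (hs : 0 < s) :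
    besselK1 s = s * ((1 / s + 1 / s ^ 2) * Real.exp (-s) - J s) := by
  have h1 : ∀ t ∈ Ioi (1:ℝ), Real.exp (-s * t) * (t ^ 2 - 1) ^ ((1:ℝ)/2)
      = t * Real.exp (-s * t) - Real.exp (-s * t) * (t - Real.sqrt (t ^ 2 - 1)) := by
    intro t _
    rw [← Real.sqrt_eq_rpow]
    ring
  rw [besselK1, setIntegral_congr_fun measurableSet_Ioi h1,
    integral_sub (integrableOn_t_exp hs zero_le_one) (integrableOn_exp_sub hs),
    integral_t_exp hs zero_le_one]
  rw [show J s = ∫ t in Ioi (1:ℝ), Real.exp (-s * t) * (t - Real.sqrt (t ^ 2 - 1)) from rfl]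
  norm_num

lemma Fk_eq {s : ℝ} (hs : 0 < s) :
    Fk s = (1 - (1 + s) * Real.exp (-s)) / s + s * J s := by
  rw [Fk, besselK1_val hs]
  have hs' : s ≠ 0 := ne_of_gt hs
  field_simp
  ring

lemma g_nonneg {s : ℝ} (hs : 0 < s) : 0 ≤ (1 - (1 + s) * Real.exp (-s)) / s := by
  apply div_nonneg _ hs.le
  rw [sub_nonneg, Real.exp_neg]
  have hE : (0:ℝ) < Real.exp s := Real.exp_pos s
  have h1 : 1 + s ≤ Real.exp s := by linarith [Real.add_one_le_exp s]
  have h2 := mul_le_mul_of_nonneg_right h1 (inv_nonneg.mpr hE.le)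
  rwa [mul_inv_cancel₀ (ne_of_gt hE)] at h2

lemma g_le_s {s : ℝ} (hs : 0 < s) : (1 - (1 + s) * Real.exp (-s)) / s ≤ s := by
  rw [div_le_iff₀ hs]
  have h1 : 1 - s ≤ Real.exp (-s) := by linarith [Real.add_one_le_exp (-s)]
  nlinarith [mul_le_mul_of_nonneg_left h1 (show (0:ℝ) ≤ 1 + s by linarith)]

lemma g_le_one {s : ℝ} (hs : 0 < s) : (1 - (1 + s) * Real.exp (-s)) / s ≤ 1 := by
  rcases le_or_gt s 1 with h | h
  · linarith [g_le_s hs]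
  · rw [div_le_iff₀ hs]
    have hE : (0:ℝ) < Real.exp (-s) := Real.exp_pos _
    nlinarith

lemma sJ_le_one {s : ℝ} (hs : 0 < s) : s * J s ≤ 1 := by
  have h := J_le hs (le_refl (1:ℝ))
  have h2 : J s ≤ Real.exp (-s * 1) / s := by simpa using h
  have h3 := mul_le_mul_of_nonneg_left h2 hs.le
  rw [mul_div_cancel₀ _ (ne_of_gt hs)] at h3
  calc s * J s ≤ Real.exp (-s * 1) := h3
    _ ≤ 1 := by rw [Real.exp_le_one_iff]; nlinarith

lemma Fk_nonneg {s : ℝ} (hs : 0 < s) : 0 ≤ Fk s := by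
  rw [Fk_eq hs]
  have := g_nonneg hs
  have := mul_nonneg hs.le (J_nonneg s)
  linarith

lemma Fk_le_two {s : ℝ} (hs : 0 < s) : Fk s ≤ 2 := by
  rw [Fk_eq hs]
  linarith [g_le_one hs, sJ_le_one hs]

lemma Fk_le {s : ℝ} (hs : 0 < s) : Fk s ≤ s + 2 * Real.sqrt s := by
  rcases le_or_gt s 1 with hs1 | hs1
  · have hss : 0 < Real.sqrt s := Real.sqrt_pos.mpr hs
    have hsle1 : Real.sqrt s ≤ 1 := by
      rw [show (1:ℝ) = Real.sqrt 1 by simp]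
      exact Real.sqrt_le_sqrt hs1
    set M : ℝ := (Real.sqrt s)⁻¹ with hMdef
    have hM : 1 ≤ M := by
      rw [hMdef, le_inv_comm₀ one_pos hss]
      simpa using hsle1
    have hsM : s * M = Real.sqrt s := by
      rw [hMdef]
      field_simp
      exact (Real.sq_sqrt hs.le).symm
    have hinvM : 1 / M = Real.sqrt s := by
      rw [hMdef, one_div, inv_inv]
    have hJ := J_le hs hM
    have hsJ : s * J s ≤ s * M + 1 / M := by
      have h1 := mul_le_mul_of_nonneg_left hJ hs.le
      have hexp : Real.exp (-s * M) ≤ 1 := by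
        rw [Real.exp_le_one_iff]
        nlinarith
      have hMpos : (0:ℝ) < M := lt_of_lt_of_le one_pos hM
      have h2 : s * ((M - 1) + 1 / M * (Real.exp (-s * M) / s))
          = s * (M - 1) + (1 / M) * Real.exp (-s * M) := by
        field_simp
      rw [h2] at h1
      have h3 : (1 / M) * Real.exp (-s * M) ≤ 1 / M := by
        have := mul_le_mul_of_nonneg_left hexp (le_of_lt (one_div_pos.mpr hMpos))
        simpa using this
      nlinarith
    rw [Fk_eq hs]
    have hg := g_le_s hs
    rw [hsM, hinvM] at hsJ
    linarith
  · have h2 := Fk_le_two hs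
    have hsq : 1 ≤ Real.sqrt s := by
      rw [show (1:ℝ) = Real.sqrt 1 by simp]
      exact Real.sqrt_le_sqrt hs1.le
    nlinarith

/-! ### Relating `Kalpha` to `Fk` -/

lemma DPsi_eq {α r : ℝ} (hα : 0 < α) (hr : 0 < r) :
    DPsi α r = 1 / (2 * π * α) * Fk (r / α) := by
  rw [DPsi, Fk]
  have hπ : (0:ℝ) < π := Real.pi_pos
  have hα' : α ≠ 0 := ne_of_gt hα
  have hπ' : π ≠ 0 := ne_of_gt hπ
  field_simp

lemma abs_DPsi {α r : ℝ} (hα : 0 < α) (hr : 0 < r) :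
    |DPsi α r| = 1 / (2 * π * α) * Fk (r / α) := by
  rw [DPsi_eq hα hr, abs_of_nonneg]
  have hπ : (0:ℝ) < π := Real.pi_pos
  exact mul_nonneg (by positivity) (Fk_nonneg (div_pos hr hα))

lemma norm_perp (x : E2) : ‖perp x‖ = ‖x‖ := by
  rw [EuclideanSpace.norm_eq, EuclideanSpace.norm_eq]
  congr 1
  rw [Fin.sum_univ_two, Fin.sum_univ_two]
  simp [perp, Real.norm_eq_abs, sq_abs]
  ring

lemma norm_Kalpha_ne {α : ℝ} (hα : 0 < α) {x : E2} (hx : x ≠ 0) :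
    ‖Kalpha α x‖ = 1 / (2 * π * α) * Fk (‖x‖ / α) := by
  have hxn : (0:ℝ) < ‖x‖ := norm_pos_iff.mpr hx
  rw [Kalpha, if_neg hx, norm_smul, norm_perp, Real.norm_eq_abs, abs_div, abs_norm,
    div_mul_cancel₀ _ (ne_of_gt hxn), abs_DPsi hα hxn]

/-! ### Continuity of `besselK1` -/

lemma besselK1_continuousAt {s : ℝ} (hs : 0 < s) : ContinuousAt besselK1 s := by
  have heq : ∀ r : ℝ, (∫ t in Ioi (1:ℝ), Real.exp (-r * t) * (t ^ 2 - 1) ^ ((1:ℝ)/2))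
      = ∫ t in Ioi (1:ℝ), Real.exp (-r * t) * Real.sqrt (t ^ 2 - 1) := by
    intro r
    exact setIntegral_congr_fun measurableSet_Ioi
      (fun t _ => by rw [← Real.sqrt_eq_rpow])
  have key : ContinuousAt
      (fun r : ℝ => ∫ t in Ioi (1:ℝ), Real.exp (-r * t) * Real.sqrt (t ^ 2 - 1)) s := by
    apply continuousAt_of_dominated (bound := fun t : ℝ => t * Real.exp (-(s/2) * t))
    · filter_upwards with r
      exact (Continuous.aestronglyMeasurable (by fun_prop)).restrict
    · have hmem : Ioi (s/2) ∈ 𝓝 s := IsOpen.mem_nhds isOpen_Ioi (by simpa using half_lt_self hs)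
      filter_upwards [hmem] with r hr
      rw [ae_restrict_iff' measurableSet_Ioi]
      filter_upwards with t ht
      have ht1 : (1:ℝ) ≤ t := le_of_lt ht
      have ht0 : (0:ℝ) < t := by linarith
      rw [Real.norm_eq_abs,
        abs_of_nonneg (mul_nonneg (Real.exp_pos _).le (Real.sqrt_nonneg _))]
      have hre : Real.exp (-r * t) ≤ Real.exp (-(s/2) * t) := by
        apply Real.exp_le_exp.mpr
        have : s/2 < r := hr
        nlinarith
      calc Real.exp (-r * t) * Real.sqrt (t ^ 2 - 1)
          ≤ Real.exp (-(s/2) * t) * t :=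
            mul_le_mul hre (sqrt_le_self' ht1) (Real.sqrt_nonneg _) (Real.exp_pos _).le
        _ = t * Real.exp (-(s/2) * t) := mul_comm _ _
    · exact integrableOn_t_exp (half_pos hs) zero_le_one
    · filter_upwards with t
      exact Continuous.continuousAt (by fun_prop)
  have h2 : ContinuousAt (fun r : ℝ =>
      r * ∫ t in Ioi (1:ℝ), Real.exp (-r * t) * (t ^ 2 - 1) ^ ((1:ℝ)/2)) s := by
    simp only [heq]
    exact continuousAt_id.mul key
  exact h2

/-! ### Continuity of `perp` -/

lemma continuous_perp : Continuous perp := by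
  unfold perp
  apply (PiLp.continuous_toLp 2 (fun _ : Fin 2 => ℝ)).comp
  apply continuous_pi
  intro i
  fin_cases i
  · simp only [Fin.zero_eta, Fin.isValue, Matrix.cons_val_zero]
    exact (PiLp.continuous_apply 2 (fun _ : Fin 2 => ℝ) (1 : Fin 2)).neg
  · simpa using PiLp.continuous_apply 2 (fun _ : Fin 2 => ℝ) (0 : Fin 2)

end KP

open KP in
/-- For every `α > 0` the smoothed kernel `K^α` is continuous on all of `ℝ²`
(including at the origin), and `|K^α(x)| ≤ C/α` with `C` independent of `α`. -/
theorem Kalpha_continuous_and_bounded :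
    (∀ α : ℝ, 0 < α → Continuous (Kalpha α)) ∧
    (∃ C : ℝ, 0 < C ∧ ∀ α : ℝ, 0 < α → ∀ x : E2, ‖Kalpha α x‖ ≤ C / α) := by
  have hπ : (0:ℝ) < π := Real.pi_pos
  constructor
  · intro α hα
    rw [continuous_iff_continuousAt]
    intro x
    by_cases hx : x = 0
    · subst hx
      have h0 : Kalpha α 0 = 0 := if_pos rfl
      rw [ContinuousAt, h0]
      apply squeeze_zero_norm
        (a := fun y : E2 => 1 / (2 * π * α) * (‖y‖ / α + 2 * Real.sqrt (‖y‖ / α)))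
      · intro y
        by_cases hy : y = 0
        · simp [hy, h0]
        · rw [norm_Kalpha_ne hα hy]
          have hyn : (0:ℝ) < ‖y‖ := norm_pos_iff.mpr hy
          exact mul_le_mul_of_nonneg_left (Fk_le (div_pos hyn hα)) (by positivity)
      · have hcont : Continuous
            (fun y : E2 => 1 / (2 * π * α) * (‖y‖ / α + 2 * Real.sqrt (‖y‖ / α))) := by
          fun_prop
        have := hcont.tendsto (0 : E2)
        simpa using this
    · have hxn : (0:ℝ) < ‖x‖ := norm_pos_iff.mpr hx
      have hD : ContinuousAt (fun r : ℝ => DPsi α r) ‖x‖ := by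
        have hdiv : ContinuousAt (fun r : ℝ => r / α) ‖x‖ := (continuous_id.div_const α).continuousAt
        have hb : ContinuousAt (besselK1 ∘ fun r : ℝ => r / α) ‖x‖ :=
          ContinuousAt.comp (besselK1_continuousAt (div_pos hxn hα)) hdiv
        have h1r : ContinuousAt (fun r : ℝ => 1 / r) ‖x‖ :=
          ContinuousAt.div continuousAt_const continuousAt_id (ne_of_gt hxn)
        unfold DPsi
        exact continuousAt_const.mul (h1r.sub (continuousAt_const.mul hb))
      have hc1 : ContinuousAt (fun y : E2 => DPsi α ‖y‖) x :=
        hD.comp continuous_norm.continuousAt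
      have hc : ContinuousAt (fun y : E2 => (DPsi α ‖y‖ / ‖y‖) • perp y) x :=
        (hc1.div continuous_norm.continuousAt (ne_of_gt hxn)).smul
          continuous_perp.continuousAt
      have hev : (fun y : E2 => (DPsi α ‖y‖ / ‖y‖) • perp y) =ᶠ[𝓝 x] Kalpha α := by
        filter_upwards [IsOpen.mem_nhds isOpen_compl_singleton
          (show x ∈ ({(0:E2)}ᶜ : Set E2) from hx)] with y hy
        have hy' : y ≠ 0 := hy
        rw [Kalpha, if_neg hy']
      exact hc.congr hev
  · refine ⟨1 / π, by positivity, fun α hα x => ?_⟩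
    by_cases hx : x = 0
    · rw [hx, show Kalpha α 0 = 0 from if_pos rfl, norm_zero]
      positivity
    · rw [norm_Kalpha_ne hα hx]
      have hxn : (0:ℝ) < ‖x‖ := norm_pos_iff.mpr hx
      have h2 := Fk_le_two (div_pos hxn hα)
      calc 1 / (2 * π * α) * Fk (‖x‖ / α)
          ≤ 1 / (2 * π * α) * 2 := mul_le_mul_of_nonneg_left h2 (by positivity)
        _ = (1 / π) / α := by field_simp
end
end

section
/- There exists a constant C > 0 such that for every α > 0 and every x ∈ ℝ² with 0 < |x| ≤ α/2: |K^α(x) + (1/(4π)) (1/α²) x^⊥ log(|x|/α)| ≤ C |x|/α². In other words, as |x|/α → 0, K^α(x) = -(1/(4π))(1/α²) x^⊥ log(|x|/α) + O(|x|/α²). -/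
noncomputable section

open Real MeasureTheory Filter Set intervalIntegral Classical
open Topology

namespace KAux

variable {s : ℝ}


/-- `g t = t - √(t²-1)`. -/
def gg (t : ℝ) : ℝ := t - Real.sqrt (t ^ 2 - 1)

lemma sqrt_facts {t : ℝ} (ht : 1 ≤ t) :
    0 ≤ Real.sqrt (t ^ 2 - 1) ∧ Real.sqrt (t ^ 2 - 1) ≤ t ∧
      Real.sqrt (t ^ 2 - 1) ^ 2 = t ^ 2 - 1 := by
  have h1 : (0:ℝ) ≤ t ^ 2 - 1 := by nlinarith
  refine ⟨Real.sqrt_nonneg _, ?_, Real.sq_sqrt h1⟩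
  have : Real.sqrt (t ^ 2 - 1) ≤ Real.sqrt (t ^ 2) := Real.sqrt_le_sqrt (by linarith)
  simpa [Real.sqrt_sq (by linarith : (0:ℝ) ≤ t)] using this

lemma gg_nonneg {t : ℝ} (ht : 1 ≤ t) : 0 ≤ gg t := by
  obtain ⟨h0, h1, h2⟩ := sqrt_facts ht
  simp only [gg]; linarith

lemma gg_le_one {t : ℝ} (ht : 1 ≤ t) : gg t ≤ 1 := by
  obtain ⟨h0, h1, h2⟩ := sqrt_facts ht
  simp only [gg]; nlinarith

lemma half_inv_le_gg {t : ℝ} (ht : 1 ≤ t) : 1 / (2 * t) ≤ gg t := by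
  obtain ⟨h0, h1, h2⟩ := sqrt_facts ht
  have ht0 : (0:ℝ) < t := by linarith
  rw [gg, div_le_iff₀ (by linarith)]
  nlinarith

lemma gg_sub_le {t : ℝ} (ht : 1 ≤ t) : gg t - 1 / (2 * t) ≤ 1 / 2 * t ^ (-3 : ℝ) := by
  obtain ⟨h0, h1, h2⟩ := sqrt_facts ht
  have ht0 : (0:ℝ) < t := by linarith
  have hr : t ^ (-3 : ℝ) = (t ^ 3)⁻¹ := by
    rw [show (-3:ℝ) = -(3:ℕ) by norm_num, Real.rpow_neg ht0.le, Real.rpow_natCast]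
  rw [hr, gg]
  set u := Real.sqrt (t ^ 2 - 1) with hu
  have htu : t * u ≤ t ^ 2 := by nlinarith
  have h5 : 0 ≤ u * ((1 + t ^ 2) - t * u) := mul_nonneg h0 (by nlinarith)
  have h6 : 2 * t ^ 3 ≤ (1 + t ^ 2) * (t + u) := by nlinarith
  have key : 2 * t ^ 3 * (t - u) ≤ 1 + t ^ 2 := by
    nlinarith [mul_pos (by linarith : (0:ℝ) < t + u)
      (by positivity : (0:ℝ) < t ^ 3)]
  have h7 : t - u ≤ (1 + t ^ 2) / (2 * t ^ 3) := by
    rw [le_div_iff₀ (by positivity)]; linarith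
  have h8 : (1 + t ^ 2) / (2 * t ^ 3) = 1 / 2 * (t ^ 3)⁻¹ + 1 / (2 * t) := by
    field_simp
  linarith [h7]


lemma cont_gg : Continuous gg := by
  unfold gg
  exact continuous_id.sub (Real.continuous_sqrt.comp (by continuity))

variable {s : ℝ}

lemma int_exp (hs : 0 < s) (a : ℝ) : IntegrableOn (fun t : ℝ => Real.exp (-s * t)) (Ioi a) :=
  exp_neg_integrableOn_Ioi a hs

lemma int_t_exp (hs : 0 < s) : IntegrableOn (fun t : ℝ => Real.exp (-s * t) * t) (Ioi 1) := by
  have hbig : IntegrableOn (fun t : ℝ => (2 / s) * Real.exp (-(s / 2) * t)) (Ioi 1) :=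
    (exp_neg_integrableOn_Ioi 1 (by linarith)).const_mul _
  refine hbig.integrable.mono ?_ ?_
  · exact ((Real.continuous_exp.comp (by continuity)).mul continuous_id).aestronglyMeasurable
  · filter_upwards [ae_restrict_mem measurableSet_Ioi] with t ht
    have ht1 : (1:ℝ) < t := ht
    have ht0 : (0:ℝ) < t := by linarith
    have h1 : s / 2 * t ≤ Real.exp (s / 2 * t) := by
      linarith [Real.add_one_le_exp (s / 2 * t)]
    have h2 : t ≤ 2 / s * Real.exp (s / 2 * t) := by
      have := mul_le_mul_of_nonneg_left h1 (by positivity : (0:ℝ) ≤ 2 / s)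
      calc t = 2 / s * (s / 2 * t) := by field_simp
        _ ≤ 2 / s * Real.exp (s / 2 * t) := this
    have key : Real.exp (-s * t) * t ≤ 2 / s * Real.exp (-(s / 2) * t) := by
      have := mul_le_mul_of_nonneg_left h2 (Real.exp_pos (-s * t)).le
      calc Real.exp (-s * t) * t ≤ Real.exp (-s * t) * (2 / s * Real.exp (s / 2 * t)) := this
        _ = 2 / s * (Real.exp (-s * t) * Real.exp (s / 2 * t)) := by ring
        _ = 2 / s * Real.exp (-(s / 2) * t) := by rw [← Real.exp_add]; ring_nf
    have hpos : 0 ≤ Real.exp (-s * t) * t := by positivity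
    simp only [Real.norm_eq_abs, abs_of_nonneg hpos]
    rw [abs_of_nonneg (by positivity : (0:ℝ) ≤ 2 / s * Real.exp (-(s / 2) * t))]
    exact key

lemma int_gg_exp (hs : 0 < s) : IntegrableOn (fun t : ℝ => Real.exp (-s * t) * gg t) (Ioi 1) := by
  refine (int_exp hs 1).integrable.mono
    ((Real.continuous_exp.comp (by continuity)).mul cont_gg).aestronglyMeasurable ?_
  filter_upwards [ae_restrict_mem measurableSet_Ioi] with t ht
  have ht1 : (1:ℝ) < t := ht
  have h0 := gg_nonneg ht1.le
  have h1 := gg_le_one ht1.le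
  have hpos : 0 ≤ Real.exp (-s * t) * gg t := by positivity
  simp only [Real.norm_eq_abs, abs_of_nonneg hpos, abs_of_nonneg (Real.exp_pos (-s*t)).le]
  nlinarith [Real.exp_pos (-s * t)]

lemma int_inv2t_exp (hs : 0 < s) :
    IntegrableOn (fun t : ℝ => Real.exp (-s * t) * (1 / (2 * t))) (Ioi 1) := by
  refine (int_exp hs 1).integrable.mono ?_ ?_
  · exact ((Real.continuous_exp.comp (by continuity)).aestronglyMeasurable.mul
      ((measurable_const.div (measurable_const.mul measurable_id)).aestronglyMeasurable))
  · filter_upwards [ae_restrict_mem measurableSet_Ioi] with t ht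
    have ht1 : (1:ℝ) < t := ht
    have h1 : 0 ≤ 1 / (2 * t) := by positivity
    have h2 : 1 / (2 * t) ≤ 1 := by rw [div_le_one (by linarith)]; linarith
    have hpos : 0 ≤ Real.exp (-s * t) * (1 / (2 * t)) := by positivity
    simp only [Real.norm_eq_abs, abs_of_nonneg hpos, abs_of_nonneg (Real.exp_pos (-s*t)).le]
    nlinarith [Real.exp_pos (-s * t)]

lemma val_t_exp (hs : 0 < s) :
    ∫ t in Ioi (1:ℝ), Real.exp (-s * t) * t = Real.exp (-s) * (1 / s + 1 / s ^ 2) := by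
  have hderiv : ∀ t ∈ Ici (1:ℝ),
      HasDerivAt (fun t : ℝ => -(Real.exp (-s * t) * (t / s + 1 / s ^ 2)))
        (Real.exp (-s * t) * t) t := by
    intro t _
    have h1 : HasDerivAt (fun t : ℝ => Real.exp (-s * t)) (Real.exp (-s * t) * (-s)) t := by
      simpa using ((hasDerivAt_id t).const_mul (-s)).exp
    have h2 : HasDerivAt (fun t : ℝ => t / s + 1 / s ^ 2) (1 / s) t :=
      ((hasDerivAt_id t).div_const s).add_const _
    have := (h1.mul h2).neg
    refine this.congr_deriv ?_
    have hs0 : s ≠ 0 := hs.ne'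
    field_simp
    ring
  have htend : Tendsto (fun t : ℝ => -(Real.exp (-s * t) * (t / s + 1 / s ^ 2))) atTop (𝓝 0) := by
    have h1 : Tendsto (fun t : ℝ => s * t) atTop atTop :=
      tendsto_id.const_mul_atTop hs
    have h2 : Tendsto (fun u : ℝ => u * Real.exp (-u)) atTop (𝓝 0) := by
      simpa using tendsto_pow_mul_exp_neg_atTop_nhds_zero 1
    have h3 : Tendsto (fun t : ℝ => (s * t) * Real.exp (-(s * t))) atTop (𝓝 0) := h2.comp h1
    have h4 : Tendsto (fun t : ℝ => Real.exp (-(s * t))) atTop (𝓝 0) :=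
      (tendsto_exp_neg_atTop_nhds_zero.comp h1)
    have h5 : Tendsto (fun t : ℝ => Real.exp (-s * t) * (t / s + 1 / s ^ 2)) atTop (𝓝 0) := by
      have : (fun t : ℝ => Real.exp (-s * t) * (t / s + 1 / s ^ 2))
          = fun t : ℝ => (1 / s ^ 2) * ((s * t) * Real.exp (-(s * t))) +
            (1 / s ^ 2) * Real.exp (-(s * t)) := by
        funext t; field_simp
      rw [this]
      have := (h3.const_mul (1 / s ^ 2)).add (h4.const_mul (1 / s ^ 2))
      simpa using this
    simpa using h5.neg
  have := integral_Ioi_of_hasDerivAt_of_tendsto' hderiv (int_t_exp hs) htend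
  rw [this]
  field_simp
  ring

lemma val_exp (hs : 0 < s) (b : ℝ) :
    ∫ t in Ioi b, Real.exp (-s * t) = Real.exp (-s * b) / s := by
  have : ∀ t : ℝ, Real.exp (-s * t) = (fun u : ℝ => Real.exp (-u)) (s * t) := by
    intro t; simp [neg_mul]
  calc ∫ t in Ioi b, Real.exp (-s * t) = ∫ t in Ioi b, (fun u : ℝ => Real.exp (-u)) (s * t) := by
        simp [neg_mul]
    _ = s⁻¹ • ∫ u in Ioi (s * b), Real.exp (-u) := by
        simpa using integral_comp_mul_left_Ioi (fun u : ℝ => Real.exp (-u)) b hs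
    _ = Real.exp (-s * b) / s := by
        rw [integral_exp_neg_Ioi]
        simp [neg_mul, smul_eq_mul]
        ring

lemma int_inv2t (b : ℝ) (hb : 1 ≤ b) : IntegrableOn (fun t : ℝ => 1 / (2 * t)) (Ioc 1 b) := by
  apply ContinuousOn.integrableOn_Icc (a := 1) (b := b) ?_ |>.mono_set Ioc_subset_Icc_self
  exact continuousOn_const.div (continuousOn_const.mul continuousOn_id)
    (fun x hx => by have := hx.1; positivity)

lemma val_inv2t (b : ℝ) (hb : 1 ≤ b) :
    ∫ t in Ioc (1:ℝ) b, 1 / (2 * t) = 1 / 2 * Real.log b := by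
  rw [← intervalIntegral.integral_of_le hb]
  have hfun : ∀ t : ℝ, 1 / (2 * t) = (1/2) * (1 / t) := by intro t; ring
  simp only [hfun]
  rw [intervalIntegral.integral_const_mul, integral_one_div]
  · norm_num
  · intro h
    rw [Set.mem_uIcc] at h
    rcases h with ⟨h1, _⟩ | ⟨_, h2⟩ <;> linarith

/-- The key logarithmic estimate. -/
lemma J_bound (hs : 0 < s) (hs2 : s ≤ 1 / 2) :
    |(∫ t in Ioi (1:ℝ), Real.exp (-s * t) * (1 / (2 * t))) + 1 / 2 * Real.log s| ≤ 1 / 2 := by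
  set b := s⁻¹ with hbdef
  have hb2 : (2:ℝ) ≤ b := by
    rw [hbdef, ← one_div, le_div_iff₀ hs]; linarith
  have hb1 : (1:ℝ) ≤ b := by linarith
  have hlogb : Real.log b = -Real.log s := by rw [hbdef, Real.log_inv]
  set f : ℝ → ℝ := fun t => Real.exp (-s * t) * (1 / (2 * t)) with hf
  have hint : IntegrableOn f (Ioi 1) := int_inv2t_exp hs
  have hint1 : IntegrableOn f (Ioc 1 b) := hint.mono_set Ioc_subset_Ioi_self
  have hint2 : IntegrableOn f (Ioi b) := hint.mono_set (Ioi_subset_Ioi hb1)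
  have hsplit : ∫ t in Ioi (1:ℝ), f t = (∫ t in Ioc (1:ℝ) b, f t) + ∫ t in Ioi b, f t := by
    rw [← setIntegral_union Ioc_disjoint_Ioi_same measurableSet_Ioi hint1 hint2,
      Ioc_union_Ioi_eq_Ioi hb1]
  -- upper bound on Ioc part
  have hub1 : ∫ t in Ioc (1:ℝ) b, f t ≤ 1 / 2 * Real.log b := by
    rw [← val_inv2t b hb1]
    refine setIntegral_mono_on hint1 (int_inv2t b hb1) measurableSet_Ioc ?_
    intro t ht
    have ht1 : (1:ℝ) < t := ht.1
    have : Real.exp (-s * t) ≤ 1 := by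
      rw [Real.exp_le_one_iff]
      nlinarith
    show Real.exp (-s * t) * (1 / (2 * t)) ≤ 1 / (2 * t)
    nlinarith [this, Real.exp_pos (-s * t), (by positivity : (0:ℝ) < 1 / (2 * t))]
  -- lower bound on Ioc part
  have hlb1 : 1 / 2 * Real.log b - 1 / 2 ≤ ∫ t in Ioc (1:ℝ) b, f t := by
    have hintlow : IntegrableOn (fun t : ℝ => 1 / (2 * t) - s / 2) (Ioc 1 b) :=
      (int_inv2t b hb1).sub (integrableOn_const measure_Ioc_lt_top.ne)
    have hmono : ∫ t in Ioc (1:ℝ) b, (1 / (2 * t) - s / 2) ≤ ∫ t in Ioc (1:ℝ) b, f t := by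
      refine setIntegral_mono_on hintlow hint1 measurableSet_Ioc ?_
      intro t ht
      have ht1 : (1:ℝ) < t := ht.1
      have hexp : 1 - s * t ≤ Real.exp (-s * t) := by
        have := Real.add_one_le_exp (-s * t); linarith
      have h2t : (0:ℝ) < 2 * t := by linarith
      rw [hf]
      have : (1 - s * t) * (1 / (2 * t)) ≤ Real.exp (-s * t) * (1 / (2 * t)) :=
        mul_le_mul_of_nonneg_right hexp (by positivity)
      refine le_trans (le_of_eq ?_) this
      field_simp
    have hval : ∫ t in Ioc (1:ℝ) b, (1 / (2 * t) - s / 2) =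
        1 / 2 * Real.log b - s / 2 * (b - 1) := by
      rw [MeasureTheory.integral_sub (int_inv2t b hb1) (integrableOn_const measure_Ioc_lt_top.ne),
        val_inv2t b hb1, setIntegral_const, Real.volume_real_Ioc_of_le hb1]
      simp [smul_eq_mul]
      ring
    have hsb : s * (b - 1) ≤ 1 := by
      have : s * b = 1 := by rw [hbdef]; field_simp
      nlinarith
    calc 1 / 2 * Real.log b - 1 / 2 ≤ 1 / 2 * Real.log b - s / 2 * (b - 1) := by linarith
      _ = ∫ t in Ioc (1:ℝ) b, (1 / (2 * t) - s / 2) := hval.symm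
      _ ≤ ∫ t in Ioc (1:ℝ) b, f t := hmono
  -- tail bounds
  have htail0 : 0 ≤ ∫ t in Ioi b, f t := by
    refine setIntegral_nonneg measurableSet_Ioi fun t ht => ?_
    have ht1 : b < t := ht
    have : (0:ℝ) < t := by linarith
    positivity
  have htail1 : ∫ t in Ioi b, f t ≤ 1 / 2 := by
    have hintub : IntegrableOn (fun t : ℝ => s / 2 * Real.exp (-s * t)) (Ioi b) :=
      ((int_exp hs b).const_mul _)
    have hmono : ∫ t in Ioi b, f t ≤ ∫ t in Ioi b, s / 2 * Real.exp (-s * t) := by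
      refine setIntegral_mono_on hint2 hintub measurableSet_Ioi ?_
      intro t ht
      have htb : b < t := ht
      have ht0 : (0:ℝ) < t := by linarith
      have h1t : 1 / t ≤ s := by
        rw [div_le_iff₀ ht0]
        rw [hbdef] at htb
        calc (1:ℝ) = s * s⁻¹ := by field_simp
          _ ≤ s * t := by nlinarith
      show Real.exp (-s * t) * (1 / (2 * t)) ≤ s / 2 * Real.exp (-s * t)
      have : 1 / (2 * t) ≤ s / 2 := by
        rw [div_le_div_iff₀ (by linarith) (by norm_num)]
        rw [div_le_iff₀ ht0] at h1t
        nlinarith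
      nlinarith [Real.exp_pos (-s * t)]
    have hval2 : ∫ t in Ioi b, s / 2 * Real.exp (-s * t) = Real.exp (-s * b) / 2 := by
      rw [MeasureTheory.integral_const_mul, val_exp hs b]
      field_simp
    have : Real.exp (-s * b) ≤ 1 := by
      rw [Real.exp_le_one_iff]
      nlinarith
    calc ∫ t in Ioi b, f t ≤ Real.exp (-s * b) / 2 := by rw [← hval2]; exact hmono
      _ ≤ 1 / 2 := by linarith
  -- combine
  rw [hsplit, hlogb] at *
  rw [abs_le]
  constructor <;> nlinarith [hub1, hlb1, htail0, htail1]

lemma I3_bound (hs : 0 < s) :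
    |∫ t in Ioi (1:ℝ), (Real.exp (-s * t) * gg t - Real.exp (-s * t) * (1 / (2 * t)))| ≤ 1 / 4 := by
  have hg : Integrable (fun t : ℝ => 1 / 2 * t ^ (-3 : ℝ)) (volume.restrict (Ioi 1)) :=
    (integrableOn_Ioi_rpow_of_lt (by norm_num) one_pos).const_mul _
  have hb : ∀ᵐ t ∂(volume.restrict (Ioi (1:ℝ))),
      ‖Real.exp (-s * t) * gg t - Real.exp (-s * t) * (1 / (2 * t))‖ ≤ 1 / 2 * t ^ (-3 : ℝ) := by
    filter_upwards [ae_restrict_mem measurableSet_Ioi] with t ht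
    have ht1 : (1:ℝ) < t := ht
    have h0 := half_inv_le_gg ht1.le
    have h1 := gg_sub_le ht1.le
    have hexple : Real.exp (-s * t) ≤ 1 := by
      rw [Real.exp_le_one_iff]; nlinarith
    have heq : Real.exp (-s * t) * gg t - Real.exp (-s * t) * (1 / (2 * t))
        = Real.exp (-s * t) * (gg t - 1 / (2 * t)) := by ring
    rw [heq, Real.norm_eq_abs, abs_of_nonneg (by nlinarith [Real.exp_pos (-s * t)])]
    nlinarith [Real.exp_pos (-s * t)]
  have := norm_integral_le_of_norm_le hg hb
  have hval : ∫ t in Ioi (1:ℝ), 1 / 2 * t ^ (-3 : ℝ) = 1 / 4 := by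
    rw [MeasureTheory.integral_const_mul, integral_Ioi_rpow_of_lt (by norm_num) one_pos]
    norm_num
  rw [hval] at this
  simpa using this

lemma K1_expand (hs : 0 < s) :
    besselK1 s = s * ((∫ t in Ioi (1:ℝ), Real.exp (-s * t) * t)
      - (∫ t in Ioi (1:ℝ), Real.exp (-s * t) * (1 / (2 * t)))
      - (∫ t in Ioi (1:ℝ), (Real.exp (-s * t) * gg t - Real.exp (-s * t) * (1 / (2 * t))))) := by
  rw [besselK1]
  congr 1
  have hcong : ∫ t in Ioi (1:ℝ), Real.exp (-s * t) * (t ^ 2 - 1) ^ ((1:ℝ)/2)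
      = ∫ t in Ioi (1:ℝ), (Real.exp (-s * t) * t - Real.exp (-s * t) * (1 / (2 * t))
        - (Real.exp (-s * t) * gg t - Real.exp (-s * t) * (1 / (2 * t)))) := by
    refine setIntegral_congr_fun measurableSet_Ioi fun t ht => ?_
    have ht1 : (1:ℝ) < t := ht
    rw [← Real.sqrt_eq_rpow, gg]
    ring
  rw [hcong]
  have hAB : IntegrableOn (fun t : ℝ => Real.exp (-s * t) * t
      - Real.exp (-s * t) * (1 / (2 * t))) (Ioi 1) := (int_t_exp hs).sub (int_inv2t_exp hs)
  have hC : IntegrableOn (fun t : ℝ => Real.exp (-s * t) * gg t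
      - Real.exp (-s * t) * (1 / (2 * t))) (Ioi 1) := (int_gg_exp hs).sub (int_inv2t_exp hs)
  rw [integral_sub hAB hC, integral_sub (int_t_exp hs) (int_inv2t_exp hs)]

lemma key (hs : 0 < s) (hs2 : s ≤ 1 / 2) :
    |1 / s - besselK1 s + s / 2 * Real.log s| ≤ 2 * s := by
  set I1 := ∫ t in Ioi (1:ℝ), Real.exp (-s * t) * t with hI1
  set I2 := ∫ t in Ioi (1:ℝ), Real.exp (-s * t) * (1 / (2 * t)) with hI2
  set I3 := ∫ t in Ioi (1:ℝ), (Real.exp (-s * t) * gg t - Real.exp (-s * t) * (1 / (2 * t))) with hI3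
  have hK : besselK1 s = s * (I1 - I2 - I3) := K1_expand hs
  have e1 : |1 / s - s * I1| ≤ s := by
    have hv : s * I1 = Real.exp (-s) * (1 + s) / s := by
      rw [hI1, val_t_exp hs]; field_simp; ring
    have h1 : 1 - Real.exp (-s) * (1 + s) ≤ s ^ 2 := by
      nlinarith [Real.add_one_le_exp (-s), Real.exp_pos (-s)]
    have h2 : 0 ≤ 1 - Real.exp (-s) * (1 + s) := by
      have := Real.add_one_le_exp s
      have hep : Real.exp (-s) * Real.exp s = 1 := by
        rw [← Real.exp_add]; simp
      nlinarith [Real.exp_pos (-s), Real.exp_pos s]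
    have heq : 1 / s - s * I1 = (1 - Real.exp (-s) * (1 + s)) / s := by
      rw [hv]; field_simp
    rw [heq, abs_div, abs_of_pos hs, abs_of_nonneg h2, div_le_iff₀ hs]
    nlinarith
  have e2 : |s * (I2 + 1 / 2 * Real.log s)| ≤ s * (1 / 2) := by
    rw [abs_mul, abs_of_pos hs]
    exact mul_le_mul_of_nonneg_left (J_bound hs hs2) hs.le
  have e3 : |s * I3| ≤ s * (1 / 4) := by
    rw [abs_mul, abs_of_pos hs]
    exact mul_le_mul_of_nonneg_left (I3_bound hs) hs.le
  have hsum : 1 / s - besselK1 s + s / 2 * Real.log s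
      = (1 / s - s * I1) + s * (I2 + 1 / 2 * Real.log s) + s * I3 := by
    rw [hK]; ring
  rw [hsum]
  calc |(1 / s - s * I1) + s * (I2 + 1 / 2 * Real.log s) + s * I3|
      ≤ |(1 / s - s * I1) + s * (I2 + 1 / 2 * Real.log s)| + |s * I3| := abs_add_le _ _
    _ ≤ |1 / s - s * I1| + |s * (I2 + 1 / 2 * Real.log s)| + |s * I3| := by
        linarith [abs_add_le (1 / s - s * I1) (s * (I2 + 1 / 2 * Real.log s))]
    _ ≤ 2 * s := by linarith

lemma norm_perp (x : E2) : ‖perp x‖ = ‖x‖ := by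
  rw [EuclideanSpace.norm_eq, EuclideanSpace.norm_eq]
  congr 1
  simp [perp, Fin.sum_univ_two]
  ring


end KAux

/-- Near the origin, `K^α(x) = -(1/(4π))(1/α²) x^⊥ log(|x|/α) + O(|x|/α²)`:
there is a constant `C > 0`, independent of `α`, such that for `0 < |x| ≤ α/2`,
`|K^α(x) + (1/(4πα²)) log(|x|/α) x^⊥| ≤ C|x|/α²`. -/
theorem Kalpha_asymptotics_near_origin :
    ∃ C : ℝ, 0 < C ∧ ∀ α : ℝ, 0 < α → ∀ x : E2, 0 < ‖x‖ → ‖x‖ ≤ α / 2 →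
      ‖Kalpha α x + ((1 / (4 * π)) * (1 / α ^ 2) * Real.log (‖x‖ / α)) • perp x‖ ≤
        C * ‖x‖ / α ^ 2 := by
  refine ⟨2, by norm_num, fun α hα x hx hx2 => ?_⟩
  set r := ‖x‖ with hr
  have hx0 : x ≠ 0 := by
    intro h
    rw [hr, h, norm_zero] at hx
    exact lt_irrefl 0 hx
  have hs : 0 < r / α := div_pos hx hα
  have hs2 : r / α ≤ 1 / 2 := by
    rw [div_le_div_iff₀ hα (by norm_num)]
    linarith
  have hrw : Kalpha α x + ((1 / (4 * π)) * (1 / α ^ 2) * Real.log (r / α)) • perp x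
      = ((DPsi α r / r) + (1 / (4 * π)) * (1 / α ^ 2) * Real.log (r / α)) • perp x := by
    rw [Kalpha, if_neg hx0, add_smul]
  have hscalar : (DPsi α r / r) + (1 / (4 * π)) * (1 / α ^ 2) * Real.log (r / α)
      = (1 / (2 * π * r * α)) * (1 / (r / α) - besselK1 (r / α) + (r / α) / 2 * Real.log (r / α)) := by
    rw [DPsi]
    have hπ := Real.pi_ne_zero
    have hr0 : r ≠ 0 := ne_of_gt hx
    have hα0 : α ≠ 0 := ne_of_gt hα
    field_simp
    ring
  rw [hrw, norm_smul, KAux.norm_perp, Real.norm_eq_abs, hscalar]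
  have hbound := KAux.key hs hs2
  have h1 : |(1 / (2 * π * r * α)) * (1 / (r / α) - besselK1 (r / α) + (r / α) / 2 * Real.log (r / α))|
      ≤ (1 / (2 * π * r * α)) * (2 * (r / α)) := by
    rw [abs_mul]
    have hc : (0:ℝ) < 2 * π * r * α := by positivity
    rw [abs_of_pos (by positivity : (0:ℝ) < 1 / (2 * π * r * α))]
    exact mul_le_mul_of_nonneg_left hbound (by positivity)
  calc |(1 / (2 * π * r * α)) * (1 / (r / α) - besselK1 (r / α) + (r / α) / 2 * Real.log (r / α))| * r
      ≤ (1 / (2 * π * r * α)) * (2 * (r / α)) * r := by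
        exact mul_le_mul_of_nonneg_right h1 hx.le
    _ = (1 / π) * (r / α ^ 2) := by
        field_simp
    _ ≤ 2 * r / α ^ 2 := by
        have hπ1 : (1:ℝ) ≤ π := by linarith [Real.pi_gt_three]
        have h2 : 1 / π ≤ 1 := by rw [div_le_one (by linarith)]; linarith
        have : (1 / π) * (r / α ^ 2) ≤ 1 * (r / α ^ 2) :=
          mul_le_mul_of_nonneg_right h2 (by positivity)
        calc (1 / π) * (r / α ^ 2) ≤ 1 * (r / α ^ 2) := this
          _ = r / α ^ 2 := by ring
          _ ≤ 2 * r / α ^ 2 := by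
              rw [div_le_div_iff₀ (by positivity) (by positivity)]
              nlinarith
end
end

section
/- For every α > 0: lim_{r → ∞} r · DΨ^α(r) = 1/(2π). Consequently lim_{|x| → ∞} |x| · |K^α(x)| = 1/(2π), i.e. the smoothed kernel K^α decays like |x|^{-1} at infinity. -/
noncomputable section

open Real MeasureTheory Filter Set intervalIntegral Classical

lemma besselK1_nonneg {s : ℝ} (hs : 0 ≤ s) : 0 ≤ besselK1 s := by
  unfold besselK1
  apply mul_nonneg hs
  apply setIntegral_nonneg measurableSet_Ioi
  intro t ht
  have h1 : (1:ℝ) < t := ht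
  have h2 : (0:ℝ) ≤ t ^ 2 - 1 := by nlinarith
  positivity

lemma besselK1_le {s : ℝ} (hs : 2 ≤ s) :
    besselK1 s ≤ s * ((s - 1)⁻¹ * Real.exp (-(s - 1))) := by
  have hs1 : (0:ℝ) < s - 1 := by linarith
  have hint : IntegrableOn (fun t : ℝ => Real.exp (-(s - 1) * t)) (Ioi 1) :=
    exp_neg_integrableOn_Ioi 1 hs1
  have hmono : (∫ t in Set.Ioi (1:ℝ), Real.exp (-s * t) * (t ^ 2 - 1) ^ ((1:ℝ)/2))
      ≤ ∫ t in Set.Ioi (1:ℝ), Real.exp (-(s - 1) * t) := by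
    apply integral_mono_of_nonneg
    · refine (ae_restrict_iff' measurableSet_Ioi).2 (Filter.Eventually.of_forall ?_)
      intro t ht
      have h1 : (1:ℝ) < t := ht
      have h2 : (0:ℝ) ≤ t ^ 2 - 1 := by nlinarith
      positivity
    · exact hint
    · refine (ae_restrict_iff' measurableSet_Ioi).2 (Filter.Eventually.of_forall ?_)
      intro t ht
      have h1 : (1:ℝ) < t := ht
      have ht0 : (0:ℝ) ≤ t := by linarith
      have h2 : (t ^ 2 - 1) ^ ((1:ℝ)/2) ≤ t := by
        rw [← Real.sqrt_eq_rpow]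
        calc Real.sqrt (t ^ 2 - 1) ≤ Real.sqrt (t ^ 2) :=
              Real.sqrt_le_sqrt (by nlinarith)
          _ = t := by rw [Real.sqrt_sq ht0]
      have h3 : t ≤ Real.exp t := (t.add_one_le_exp).trans' (by linarith)
      calc Real.exp (-s * t) * (t ^ 2 - 1) ^ ((1:ℝ)/2)
          ≤ Real.exp (-s * t) * Real.exp t := by
            exact mul_le_mul_of_nonneg_left (h2.trans h3) (Real.exp_pos _).le
        _ = Real.exp (-(s - 1) * t) := by rw [← Real.exp_add]; ring_nf
  have hval : (∫ t in Set.Ioi (1:ℝ), Real.exp (-(s - 1) * t))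
      = (s - 1)⁻¹ * Real.exp (-(s - 1)) := by
    have := integral_comp_mul_left_Ioi (fun u : ℝ => Real.exp (-u)) 1 hs1
    simp only [smul_eq_mul, mul_one] at this
    rw [show (fun t : ℝ => Real.exp (-(s-1) * t)) = fun t : ℝ => Real.exp (-((s-1) * t)) by
      funext t; ring_nf]
    rw [this, integral_exp_neg_Ioi]
  unfold besselK1
  calc s * (∫ t in Set.Ioi (1:ℝ), Real.exp (-s * t) * (t ^ 2 - 1) ^ ((1:ℝ)/2))
      ≤ s * ((s - 1)⁻¹ * Real.exp (-(s - 1))) := by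
        apply mul_le_mul_of_nonneg_left _ (by linarith)
        rw [← hval]; exact hmono

lemma besselK1_decay : Tendsto (fun s : ℝ => s * besselK1 s) atTop (nhds 0) := by
  apply squeeze_zero' (g := fun s => Real.exp 1 * (s ^ 2 * Real.exp (-s)))
  · filter_upwards [eventually_ge_atTop (0:ℝ)] with s hs
    exact mul_nonneg hs (besselK1_nonneg hs)
  · filter_upwards [eventually_ge_atTop (2:ℝ)] with s hs
    have hs1 : (0:ℝ) < s - 1 := by linarith
    have h1 : s * besselK1 s ≤ s * (s * ((s - 1)⁻¹ * Real.exp (-(s - 1)))) :=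
      mul_le_mul_of_nonneg_left (besselK1_le hs) (by linarith)
    have h2 : s * (s * ((s - 1)⁻¹ * Real.exp (-(s - 1))))
        ≤ Real.exp 1 * (s ^ 2 * Real.exp (-s)) := by
      have he : Real.exp (-(s - 1)) = Real.exp 1 * Real.exp (-s) := by
        rw [← Real.exp_add]; ring_nf
      have hinv : (s - 1)⁻¹ ≤ 1 := by
        rw [inv_le_one_iff₀]; right; linarith
      calc s * (s * ((s - 1)⁻¹ * Real.exp (-(s - 1))))
          = (s - 1)⁻¹ * (s ^ 2 * Real.exp (-(s - 1))) := by ring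
        _ ≤ 1 * (s ^ 2 * Real.exp (-(s - 1))) := by
            apply mul_le_mul_of_nonneg_right hinv; positivity
        _ = Real.exp 1 * (s ^ 2 * Real.exp (-s)) := by rw [he]; ring
    linarith
  · have := (tendsto_pow_mul_exp_neg_atTop_nhds_zero 2).const_mul (Real.exp 1)
    simpa using this

lemma norm_perp (x : E2) : ‖perp x‖ = ‖x‖ := by
  rw [EuclideanSpace.norm_eq, EuclideanSpace.norm_eq]
  congr 1
  rw [Fin.sum_univ_two, Fin.sum_univ_two]
  simp [perp]
  ring

/-- decay of the smoothed kernel at infinity: `r·DΨ^α(r) → 1/(2π)` as `r → ∞`, and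
consequently `|x|·|K^α(x)| → 1/(2π)` as `|x| → ∞`, i.e. `K^α` decays like `|x|^{-1}`. -/
theorem Kalpha_decay_at_infinity (α : ℝ) (hα : 0 < α) :
    Tendsto (fun r : ℝ => r * DPsi α r) atTop (nhds (1 / (2 * π))) ∧
    Tendsto (fun x : E2 => ‖x‖ * ‖Kalpha α x‖) (Filter.comap norm atTop)
      (nhds (1 / (2 * π))) := by
  have hdiv : Tendsto (fun r : ℝ => r / α) atTop atTop :=
    tendsto_id.atTop_div_const hα
  have h0 : Tendsto (fun r : ℝ => (r / α) * besselK1 (r / α)) atTop (nhds 0) :=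
    besselK1_decay.comp hdiv
  have h1 : Tendsto (fun r : ℝ => r * DPsi α r) atTop (nhds (1 / (2 * π))) := by
    have h2 : Tendsto (fun r : ℝ => (1 / (2 * π)) * (1 - (r / α) * besselK1 (r / α)))
        atTop (nhds ((1 / (2 * π)) * (1 - 0))) :=
      (tendsto_const_nhds.sub h0).const_mul _
    rw [sub_zero, mul_one] at h2
    apply h2.congr'
    filter_upwards [eventually_gt_atTop (0:ℝ)] with r hr
    unfold DPsi
    field_simp
  refine ⟨h1, ?_⟩
  have h3 : Tendsto (fun x : E2 => ‖x‖) (Filter.comap norm atTop) atTop := tendsto_comap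
  have h4 : Tendsto (fun r : ℝ => |r * DPsi α r|) atTop (nhds |1 / (2 * π)|) := h1.abs
  have hpi : |1 / (2 * π)| = 1 / (2 * π) := abs_of_nonneg (by positivity)
  rw [hpi] at h4
  have h5 := h4.comp h3
  apply h5.congr'
  filter_upwards [h3.eventually (eventually_ge_atTop (1:ℝ))] with x hx
  have hx0 : x ≠ 0 := by
    intro h
    rw [h] at hx
    simp at hx
    linarith
  have hxn : (0:ℝ) < ‖x‖ := by positivity
  simp only [Function.comp_apply, Kalpha, if_neg hx0, norm_smul, norm_perp,
    Real.norm_eq_abs, abs_div, abs_norm, abs_mul, abs_of_pos hxn]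
  field_simp
end
end
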